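/- Let f be m-strongly convex and M-Lipschitz-differentiable, and suppose f(x) ≤ f(z). Then the deterministic LGD step x₊ = x - η(∇f(x) + λ(x - z)) with η ≤ 1/(2M), ηλ ≤ m/(2M), η√λ ≤ √m/(M√2) satisfies f(x₊) ≤ f(z). -/

import Mathlib

open scoped InnerProductSpace

/-- Descent lemma: a function with `M`-Lipschitz gradient admits a quadratic upper bound. -/
theorem descent_lemma_aux {n : ℕ} (f : EuclideanSpace ℝ (Fin n) → ℝ) (M : ℝ)
    (hdiff : Differentiable ℝ f)
    (hlip : ∀ x y, ‖gradient f x - gradient f y‖ ≤ M * ‖x - y‖)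
    (x y : EuclideanSpace ℝ (Fin n)) :
    f y ≤ f x + ⟪gradient f x, y - x⟫_ℝ + M / 2 * ‖y - x‖ ^ 2 := by
  set v := y - x with hv
  have hd : ∀ t : ℝ, HasDerivAt (fun t : ℝ => f (x + t • v)) (⟪gradient f (x + t • v), v⟫_ℝ) t := by
    intro t
    have h1 : HasDerivAt (fun t : ℝ => x + t • v) v t := by
      simpa using ((hasDerivAt_id t).smul_const v).const_add x
    have h2 := ((hdiff (x + t • v)).hasGradientAt.hasFDerivAt).comp_hasDerivAt t h1
    exact h2
  set ψ : ℝ → ℝ := fun t => f (x + t • v) - t * ⟪gradient f x, v⟫_ℝ - M / 2 * t ^ 2 * ‖v‖ ^ 2 with hψ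
  have hψd : ∀ t : ℝ, HasDerivAt ψ
      (⟪gradient f (x + t • v), v⟫_ℝ - ⟪gradient f x, v⟫_ℝ - M * t * ‖v‖ ^ 2) t := by
    intro t
    have h3 : HasDerivAt (fun t : ℝ => t * ⟪gradient f x, v⟫_ℝ) (⟪gradient f x, v⟫_ℝ) t := by
      simpa using (hasDerivAt_id t).mul_const _
    have h4 : HasDerivAt (fun t : ℝ => M / 2 * t ^ 2 * ‖v‖ ^ 2) (M * t * ‖v‖ ^ 2) t := by
      have := ((hasDerivAt_pow 2 t).const_mul (M / 2)).mul_const (‖v‖ ^ 2)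
      convert this using 1
      · rfl
      · rfl
      · ring
    exact ((hd t).sub h3).sub h4
  have key : ψ 1 ≤ ψ 0 := by
    have hanti : AntitoneOn ψ (Set.Ici (0 : ℝ)) := by
      apply antitoneOn_of_deriv_nonpos (convex_Ici 0)
      · exact fun t _ => (hψd t).continuousAt.continuousWithinAt
      · exact fun t _ => (hψd t).differentiableAt.differentiableWithinAt
      · intro t ht
        rw [interior_Ici] at ht
        rw [(hψd t).deriv]
        have h5 : ⟪gradient f (x + t • v) - gradient f x, v⟫_ℝ ≤ M * t * ‖v‖ ^ 2 := by
          calc ⟪gradient f (x + t • v) - gradient f x, v⟫_ℝ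
              ≤ ‖gradient f (x + t • v) - gradient f x‖ * ‖v‖ := real_inner_le_norm _ _
            _ ≤ (M * ‖(x + t • v) - x‖) * ‖v‖ := by
                gcongr; exact hlip _ _
            _ = M * t * ‖v‖ ^ 2 := by
                simp [norm_smul, abs_of_nonneg (le_of_lt (Set.mem_Ioi.mp ht))]; ring
        have := inner_sub_left (𝕜 := ℝ) (gradient f (x + t • v)) (gradient f x) v
        linarith [h5, this.symm.le, this.le]
    exact hanti Set.self_mem_Ici (Set.mem_Ici.2 zero_le_one) zero_le_one
  have h0 : ψ 0 = f x := by simp [hψ]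
  have h1 : ψ 1 = f y - ⟪gradient f x, v⟫_ℝ - M / 2 * ‖v‖ ^ 2 := by
    simp [hψ, hv]
  rw [h0, h1] at key
  linarith

set_option maxHeartbeats 800000 in
theorem stmt_17 {n : ℕ} (f : EuclideanSpace ℝ (Fin n) → ℝ) (m M η lam : ℝ)
    (hm : 0 < m) (hM : 0 < M)
    (hdiff : Differentiable ℝ f)
    (hconv : ∀ x y, f x + ⟪gradient f x, y - x⟫_ℝ + m / 2 * ‖y - x‖ ^ 2 ≤ f y)
    (hlip : ∀ x y, ‖gradient f x - gradient f y‖ ≤ M * ‖x - y‖)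
    (hη0 : 0 ≤ η) (hlam0 : 0 ≤ lam)
    (hη : η ≤ 1 / (2 * M)) (hηlam : η * lam ≤ m / (2 * M))
    (hηslam : η * Real.sqrt lam ≤ Real.sqrt m / (M * Real.sqrt 2))
    (x z : EuclideanSpace ℝ (Fin n)) (hxz : f x ≤ f z) :
    f (x - η • (gradient f x + lam • (x - z))) ≤ f z := by
  rcases Nat.eq_zero_or_pos n with rfl | hn
  · have hsub : (x - η • (gradient f x + lam • (x - z))) = x := by ext i; exact i.elim0
    rw [hsub]; exact hxz
  have hmM : m ≤ M := by
    set e : EuclideanSpace ℝ (Fin n) := EuclideanSpace.single ⟨0, hn⟩ (1:ℝ) with he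
    have hne : ‖e‖ = 1 := by simp [he]
    have c1 := hconv 0 e
    have c2 := hconv e 0
    have hip : ⟪gradient f e - gradient f 0, e⟫_ℝ ≤ M := by
      calc ⟪gradient f e - gradient f 0, e⟫_ℝ ≤ ‖gradient f e - gradient f 0‖ * ‖e‖ :=
            real_inner_le_norm _ _
        _ ≤ (M * ‖e - 0‖) * ‖e‖ := by gcongr; exact hlip _ _
        _ = M := by simp [hne]
    have hsplit : ⟪gradient f e - gradient f 0, e⟫_ℝ
        = ⟪gradient f e, e⟫_ℝ - ⟪gradient f 0, e⟫_ℝ := inner_sub_left _ _ _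
    simp only [sub_zero, zero_sub, hne, one_pow, mul_one, inner_neg_right, norm_neg] at c1 c2
    linarith
  set g := gradient f x with hg
  set w := x - z with hw
  set G := ‖g‖ ^ 2 with hGd
  set W := ‖w‖ ^ 2 with hWd
  set P := ⟪g, w⟫_ℝ with hPd
  have hG0 : 0 ≤ G := sq_nonneg _
  have hW0 : 0 ≤ W := sq_nonneg _
  have h1 : f (x - η • (g + lam • w)) ≤
      f x + (M / 2 * η ^ 2 - η) * G + ((M * η ^ 2 - η) * lam) * P
        + M / 2 * η ^ 2 * lam ^ 2 * W := by
    have hd := descent_lemma_aux f M hdiff hlip x (x - η • (g + lam • w))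
    have hyx : (x - η • (g + lam • w)) - x = -(η • (g + lam • w)) := by abel
    rw [hyx] at hd
    have e1 : ⟪g, -(η • (g + lam • w))⟫_ℝ = -(η * (G + lam * P)) := by
      rw [inner_neg_right, real_inner_smul_right, inner_add_right, real_inner_smul_right,
        real_inner_self_eq_norm_sq]
    have e2 : ‖-(η • (g + lam • w))‖ ^ 2 = η ^ 2 * (G + 2 * (lam * P) + lam ^ 2 * W) := by
      rw [norm_neg, norm_smul, mul_pow, Real.norm_eq_abs, sq_abs]
      congr 1
      rw [norm_add_sq_real, real_inner_smul_right, norm_smul, mul_pow, Real.norm_eq_abs, sq_abs]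
    rw [e1, e2] at hd
    calc f (x - η • (g + lam • w)) ≤ f x + -(η * (G + lam * P))
          + M / 2 * (η ^ 2 * (G + 2 * (lam * P) + lam ^ 2 * W)) := hd
      _ = f x + (M / 2 * η ^ 2 - η) * G + ((M * η ^ 2 - η) * lam) * P
          + M / 2 * η ^ 2 * lam ^ 2 * W := by ring
  have h2 : f x - f z + m / 2 * W ≤ P := by
    have hc := hconv x z
    have e3 : ⟪g, z - x⟫_ℝ = -P := by
      rw [hPd, hw, show z - x = -(x - z) by abel, inner_neg_right]
    have e4 : ‖z - x‖ ^ 2 = W := by rw [hWd, hw, norm_sub_rev]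
    rw [e3, e4] at hc
    linarith
  have hMη : M * η ≤ 1 / 2 := by
    rw [le_div_iff₀ (by positivity)] at hη
    linarith
  have hα : M * η ^ 2 ≤ η / 2 := by
    have := mul_le_mul_of_nonneg_right hMη hη0
    nlinarith
  have hc : M * η ^ 2 * lam ≤ m * η / 2 := by
    have h5 := mul_le_mul_of_nonneg_left hηlam (by positivity : (0:ℝ) ≤ M * η)
    have heq : M * η * (m / (2 * M)) = m * η / 2 := by field_simp
    rw [heq] at h5
    nlinarith [h5]
  have hβ0 : (0:ℝ) ≤ (η - M * η ^ 2) * lam :=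
    mul_nonneg (by linarith) hlam0
  have hβle : (η - M * η ^ 2) * lam ≤ 1 / 2 := by
    have h6 : η * lam ≤ 1 / 2 := by
      calc η * lam ≤ m / (2 * M) := hηlam
        _ ≤ M / (2 * M) := by gcongr
        _ = 1 / 2 := by field_simp
    have h6b : 0 ≤ M * η ^ 2 * lam := by positivity
    nlinarith [h6, h6b]
  have hW2 : M / 2 * η ^ 2 * lam ^ 2 ≤ ((η - M * η ^ 2) * lam) * (m / 2) := by
    have h7 := mul_le_mul_of_nonneg_right hc hlam0
    have h7b : (η / 2) * (lam * (m / 2)) ≤ (η - M * η ^ 2) * (lam * (m / 2)) :=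
      mul_le_mul_of_nonneg_right (by linarith) (by positivity)
    nlinarith [h7, h7b]
  have h8 := mul_le_mul_of_nonneg_left h2 hβ0
  have h10 : (M / 2 * η ^ 2 - η) * G ≤ 0 :=
    mul_nonpos_of_nonpos_of_nonneg (by linarith) hG0
  have h11 : M / 2 * η ^ 2 * lam ^ 2 * W ≤ ((η - M * η ^ 2) * lam) * (m / 2) * W :=
    mul_le_mul_of_nonneg_right hW2 hW0
  have h12 : ((η - M * η ^ 2) * lam) * (f z - f x) ≤ 1 / 2 * (f z - f x) :=
    mul_le_mul_of_nonneg_right hβle (by linarith)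
  nlinarith [h1, h8, h10, h11, h12, hxz]
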